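/- arXiv:1307.2007 — 2 statements merged into one kernel-verified Lean document; each statement's English description precedes it below -/
import Mathlib

section
/- For every two integers n and k with 2 ≤ k ≤ n, the generalized k-connectivity of the complete graph K_n equals n − ⌈k/2⌉. -/
open SimpleGraph

/-- An `S`-Steiner tree in `G`: a subgraph that is a tree and contains `S`. -/
def IsSteinerTree {V : Type*} (G : SimpleGraph V) (S : Set V) (T : G.Subgraph) : Prop :=
  T.coe.IsTree ∧ S ⊆ T.verts

/-- Two `S`-trees are internally disjoint: edge-disjoint and meeting exactly in `S`. -/
def IntDisjoint {V : Type*} (S : Set V) {G : SimpleGraph V} (T₁ T₂ : G.Subgraph) : Prop :=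
  T₁.verts ∩ T₂.verts = S ∧ ∀ u v, ¬ (T₁.Adj u v ∧ T₂.Adj u v)

/-- `κ(S)`: the maximum number of pairwise internally disjoint `S`-Steiner trees. -/
noncomputable def steinerConn {V : Type*} (G : SimpleGraph V) (S : Set V) : ℕ :=
  sSup {n | ∃ f : Fin n → G.Subgraph,
    (∀ i, IsSteinerTree G S (f i)) ∧ ∀ i j, i ≠ j → IntDisjoint S (f i) (f j)}

/-- The generalized `k`-connectivity `κ_k(G)`. -/
noncomputable def genConn {V : Type*} (G : SimpleGraph V) (k : ℕ) : ℕ :=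
  sInf {c | ∃ S : Set V, S.ncard = k ∧ steinerConn G S = c}

/-- `G` is `k`-connected: more than `k` vertices, and removing fewer than `k`
vertices leaves it connected. -/
def KConnected {V : Type*} (G : SimpleGraph V) (k : ℕ) : Prop :=
  k < Nat.card V ∧ ∀ s : Set V, s.Finite → s.ncard < k → (G.induce sᶜ).Connected

/-- The vertex connectivity `κ(G)`. -/
noncomputable def vconn {V : Type*} (G : SimpleGraph V) : ℕ :=
  sSup {k | KConnected G k}

/-- The lexicographic product `G ∘ H`. -/
def lexProd {V W : Type*} (G : SimpleGraph V) (H : SimpleGraph W) : SimpleGraph (V × W) where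
  Adj a b := G.Adj a.1 b.1 ∨ (a.1 = b.1 ∧ H.Adj a.2 b.2)
  symm := by
    constructor
    intro a b h
    rcases h with h | ⟨h1, h2⟩
    · exact Or.inl h.symm
    · exact Or.inr ⟨h1.symm, h2.symm⟩
  loopless := by
    constructor
    intro a h
    rcases h with h | ⟨_, h2⟩
    · exact G.irrefl h
    · exact H.irrefl h2

/-- The star `K_{1,m}` on `m + 1` vertices: center `none`, leaves `some i`. -/
def starGraph (m : ℕ) : SimpleGraph (Option (Fin m)) where
  Adj u v := u ≠ v ∧ (u = none ∨ v = none)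
  symm := by constructor; intro u v ⟨h1, h2⟩; exact ⟨h1.symm, h2.symm⟩
  loopless := by constructor; intro u ⟨h1, _⟩; exact h1 rfl


open SimpleGraph

lemma acyclic_of_graded {V' : Type*} (G' : SimpleGraph V') (lv : V' → ℕ) (par : V' → V')
    (hgrade : ∀ a b, G'.Adj a b → lv a ≠ lv b)
    (hlow : ∀ a b, G'.Adj a b → lv b < lv a → b = par a) : G'.IsAcyclic := by
  classical
  intro v c hc
  obtain ⟨m, hm, hmax⟩ : ∃ m ∈ c.support, ∀ x ∈ c.support, lv x ≤ lv m := by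
    obtain ⟨m, hm, hmax⟩ := Finset.exists_max_image c.support.toFinset lv
      ⟨v, by simp [Walk.start_mem_support]⟩
    exact ⟨m, by simpa using hm, fun x hx => hmax x (by simpa using hx)⟩
  have hc' : (c.rotate m hm).IsCycle := hc.rotate hm
  have hsupp : ∀ x ∈ (c.rotate m hm).support, lv x ≤ lv m := by
    intro x hx
    rw [Walk.support_eq_cons, List.mem_cons] at hx
    rcases hx with rfl | hx
    · exact le_rfl
    · exact hmax x (List.mem_of_mem_tail ((Walk.support_rotate c m hm).mem_iff.mp hx))
  have hlen := hc'.three_le_length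
  set c' := c.rotate m hm with hc'def
  clear_value c'
  cases c' with
  | nil => exact hc'.not_of_nil
  | cons h p =>
    rename_i u
    rw [Walk.cons_isCycle_iff] at hc'
    obtain ⟨hp, he⟩ := hc'
    have hu : u = par m := by
      apply hlow m u h
      have h1 : lv u ≤ lv m := hsupp u (by
        rw [Walk.support_cons]; exact List.mem_cons_of_mem _ p.start_mem_support)
      exact lt_of_le_of_ne h1 (fun hh => hgrade m u h hh.symm)
    have hdne : p.darts ≠ [] := by
      have h2 : p.darts.length = p.length := Walk.length_darts p
      simp only [Walk.length_cons] at hlen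
      intro hnil
      rw [hnil] at h2
      simp at h2
      omega
    set d := p.darts.getLast hdne with hd
    have hdmem : d ∈ p.darts := List.getLast_mem hdne
    have hdsnd : d.snd = m := by rw [hd, Walk.getLast_darts_eq_lastDart]; rfl
    have hadj : G'.Adj d.fst m := hdsnd ▸ d.adj
    have hw : d.fst = par m := by
      apply hlow m d.fst hadj.symm
      have hmem : d.fst ∈ p.support := Walk.dart_fst_mem_support_of_mem_darts p hdmem
      have h1 : lv d.fst ≤ lv m := hsupp d.fst (by
        rw [Walk.support_cons]; exact List.mem_cons_of_mem _ hmem)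
      exact lt_of_le_of_ne h1 (fun hh => hgrade m d.fst hadj.symm hh.symm)
    apply he
    have hde : d.edge ∈ p.edges := List.mem_map_of_mem (f := Dart.edge) hdmem
    have hpd : d.toProd = (par m, m) := Prod.ext hw hdsnd
    have hedge : d.edge = s(m, u) := by
      rw [Dart.edge, hpd, hu]
      exact Sym2.eq_swap
    rwa [hedge] at hde


/-- Subgraph of the complete graph given by a parent function on an index set. -/
def funcTree {n : ℕ} {ι : Type} (g : ι → Fin n) (r : ι) (q : ι → ι) :
    (⊤ : SimpleGraph (Fin n)).Subgraph where
  verts := Set.range g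
  Adj u v := u ≠ v ∧ ∃ i, i ≠ r ∧ ((u = g i ∧ v = g (q i)) ∨ (v = g i ∧ u = g (q i)))
  adj_sub h := h.1
  edge_vert := by
    rintro u v ⟨-, i, -, (⟨rfl, -⟩ | ⟨-, rfl⟩)⟩
    · exact ⟨i, rfl⟩
    · exact ⟨q i, rfl⟩
  symm := by
    constructor
    rintro u v ⟨hne, i, hir, hp⟩
    exact ⟨hne.symm, i, hir, hp.symm⟩

lemma funcTree_verts {n : ℕ} {ι : Type} (g : ι → Fin n) (r : ι) (q : ι → ι) :
    (funcTree g r q).verts = Set.range g := rfl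

lemma funcTree_adj {n : ℕ} {ι : Type} (g : ι → Fin n) (r : ι) (q : ι → ι) (u v : Fin n) :
    (funcTree g r q).Adj u v ↔
      u ≠ v ∧ ∃ i, i ≠ r ∧ ((u = g i ∧ v = g (q i)) ∨ (v = g i ∧ u = g (q i))) := Iff.rfl

theorem funcTree_isTree {n : ℕ} {ι : Type} (g : ι → Fin n) (r : ι) (q : ι → ι)
    (hg : Function.Injective g)
    (hq : ∀ i, i ≠ r → q i ≠ i ∧ (q i = r ∨ q (q i) = r)) :
    (funcTree g r q).coe.IsTree := by
  classical
  set T := funcTree g r q with hT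
  -- the basic adjacency
  have hadj : ∀ i, i ≠ r → T.Adj (g i) (g (q i)) := by
    intro i hi
    exact ⟨fun hh => (hq i hi).1 (hg hh.symm), i, hi, Or.inl ⟨rfl, rfl⟩⟩
  have hmem : ∀ i, g i ∈ T.verts := fun i => ⟨i, rfl⟩
  have hcadj : ∀ i, i ≠ r → T.coe.Adj ⟨g i, hmem i⟩ ⟨g (q i), hmem (q i)⟩ := by
    intro i hi; exact hadj i hi
  have hNE : Nonempty T.verts := ⟨⟨g r, hmem r⟩⟩
  constructor
  · -- connected
    apply Connected.mk
    have key : ∀ x : T.verts, T.coe.Reachable x ⟨g r, hmem r⟩ := by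
      rintro ⟨x, i, rfl⟩
      by_cases hi : i = r
      · subst hi; exact Reachable.refl _
      · have h1 : T.coe.Reachable ⟨g i, hmem i⟩ ⟨g (q i), hmem (q i)⟩ :=
          (hcadj i hi).reachable
        by_cases hqi : q i = r
        · have e2 : (⟨g (q i), hmem (q i)⟩ : T.verts) = ⟨g r, hmem r⟩ :=
            Subtype.ext (congrArg g hqi)
          exact e2 ▸ h1
        · have h2 : q (q i) = r := ((hq i hi).2).resolve_left hqi
          have h3 : T.coe.Reachable ⟨g (q i), hmem (q i)⟩ ⟨g (q (q i)), hmem (q (q i))⟩ :=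
            (hcadj (q i) hqi).reachable
          have e3 : (⟨g (q (q i)), hmem (q (q i))⟩ : T.verts) = ⟨g r, hmem r⟩ :=
            Subtype.ext (congrArg g h2)
          exact h1.trans (e3 ▸ h3)
    exact fun x y => (key x).trans (key y).symm
  · -- acyclic
    -- index of a vertex
    have hidx : ∀ x : T.verts, ∃ i, g i = (x : Fin n) := fun x => x.2
    choose idx hidxspec using hidx
    set lvI : ι → ℕ := fun i => if i = r then 0 else if q i = r then 1 else 2 with hlvI
    have lvq : ∀ i, i ≠ r → lvI (q i) < lvI i := by
      intro i hi
      have h2 := (hq i hi).2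
      have l1 : lvI (q i) = if q i = r then 0 else 1 := by
        simp only [hlvI]
        by_cases hqi : q i = r
        · simp [hqi]
        · rw [if_neg hqi, if_pos (h2.resolve_left hqi), if_neg hqi]
      have l2 : lvI i = if q i = r then 1 else 2 := by
        simp only [hlvI]
        rw [if_neg hi]
      rw [l1, l2]
      split_ifs <;> omega
    have hidxg : ∀ i, idx ⟨g i, hmem i⟩ = i := by
      intro i
      exact hg (hidxspec ⟨g i, hmem i⟩)
    apply acyclic_of_graded T.coe (fun x => lvI (idx x))
      (fun x => ⟨g (q (idx x)), hmem _⟩)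
    · rintro a b ⟨hne, i, hi, (⟨ha, hb⟩ | ⟨hb, ha⟩)⟩
      · have e1 : a = ⟨g i, hmem i⟩ := Subtype.ext ha
        have e2 : b = ⟨g (q i), hmem _⟩ := Subtype.ext hb
        rw [e1, e2, hidxg, hidxg]
        exact (lvq i hi).ne'
      · have e1 : b = ⟨g i, hmem i⟩ := Subtype.ext hb
        have e2 : a = ⟨g (q i), hmem _⟩ := Subtype.ext ha
        rw [e1, e2, hidxg, hidxg]
        exact (lvq i hi).ne
    · rintro a b ⟨hne, i, hi, (⟨ha, hb⟩ | ⟨hb, ha⟩)⟩ hlt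
      · have e1 : a = ⟨g i, hmem i⟩ := Subtype.ext ha
        have e2 : b = ⟨g (q i), hmem _⟩ := Subtype.ext hb
        rw [e1, e2, hidxg]
      · have e1 : b = ⟨g i, hmem i⟩ := Subtype.ext hb
        have e2 : a = ⟨g (q i), hmem _⟩ := Subtype.ext ha
        rw [e1, e2, hidxg, hidxg] at hlt
        exact absurd (lvq i hi) (not_lt_of_gt hlt)



lemma tree_edge_ncard {n : ℕ} (T : (⊤ : SimpleGraph (Fin n)).Subgraph) (ht : T.coe.IsTree) :
    T.edgeSet.ncard + 1 = T.verts.ncard := by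
  classical
  haveI : Fintype ↥T.verts := Fintype.ofFinite _
  haveI : Fintype T.coe.edgeSet := Fintype.ofFinite _
  have h1 := ht.card_edgeFinset
  have h2 : T.coe.edgeFinset.card = T.coe.edgeSet.ncard := by
    rw [Set.ncard_eq_toFinset_card']
    congr 1
  have h3 : T.edgeSet.ncard = T.coe.edgeSet.ncard := by
    rw [← Subgraph.image_coe_edgeSet_coe,
      Set.ncard_image_of_injective _ (Sym2.map.injective Subtype.val_injective)]
  have h4 : T.verts.ncard = Fintype.card ↥T.verts := by
    rw [Set.ncard_eq_toFinset_card', Set.toFinset_card]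
  omega

lemma steiner_upper {n k : ℕ} (hk : 2 ≤ k) (hkn : k ≤ n) (S : Set (Fin n)) (hS : S.ncard = k)
    {m : ℕ} (f : Fin m → (⊤ : SimpleGraph (Fin n)).Subgraph)
    (hT : ∀ i, IsSteinerTree ⊤ S (f i))
    (hD : ∀ i j, i ≠ j → IntDisjoint S (f i) (f j)) : m ≤ n - (k + 1) / 2 := by
  classical
  haveI : Fintype ↥S := Fintype.ofFinite _
  have hn0 : 0 < n := by omega
  have hScard : Fintype.card ↥S = k := by
    rw [← Set.toFinset_card, ← Set.ncard_eq_toFinset_card']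
    exact hS
  set A : Finset (Fin m) := Finset.univ.filter (fun i => (f i).verts = S) with hA
  -- |Aᶜ| ≤ n - k
  have hBcard : Aᶜ.card ≤ n - k := by
    have hchoice : ∀ i ∈ Aᶜ, ∃ v, v ∈ (f i).verts ∧ v ∉ S := by
      intro i hi
      simp only [hA, Finset.mem_compl, Finset.mem_filter, Finset.mem_univ, true_and] at hi
      by_contra hcon
      push_neg at hcon
      exact hi (Set.Subset.antisymm (fun v hv => hcon v hv) (hT i).2)
    choose w hw1 hw2 using hchoice
    have hstep : Aᶜ.card ≤ (S.toFinsetᶜ : Finset (Fin n)).card := by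
      apply Finset.card_le_card_of_injOn
        (fun i => if h : i ∈ Aᶜ then w i h else ⟨0, hn0⟩)
      · intro i hi
        have hi' : i ∈ Aᶜ := hi
        dsimp only
        rw [dif_pos hi']
        simp only [Finset.coe_compl, Set.mem_compl_iff, Finset.mem_coe, Finset.mem_compl, Set.mem_toFinset]
        exact hw2 i hi'
      · intro i hi j hj hij
        have hi' : i ∈ Aᶜ := hi
        have hj' : j ∈ Aᶜ := hj
        dsimp only at hij
        rw [dif_pos hi', dif_pos hj'] at hij
        by_contra hne
        have h1 : w i hi' ∈ (f i).verts ∩ (f j).verts := ⟨hw1 i hi', hij ▸ hw1 j hj'⟩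
        rw [(hD i j hne).1] at h1
        exact hw2 i hi' h1
    have h5 : (S.toFinsetᶜ : Finset (Fin n)).card = n - k := by
      rw [Finset.card_compl, Set.toFinset_card, hScard, Fintype.card_fin]
    exact h5 ▸ hstep
  -- |A| ≤ k / 2
  have hAcard : A.card ≤ k / 2 := by
    have hedge : ∀ i ∈ A, (f i).edgeSet.ncard = k - 1 := by
      intro i hi
      simp only [hA, Finset.mem_filter, Finset.mem_univ, true_and] at hi
      have := tree_edge_ncard (f i) (hT i).1
      rw [hi, hS] at this
      omega
    set US : Set (Sym2 (Fin n)) :=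
      Sym2.map (Subtype.val : ↥S → Fin n) '' (⊤ : SimpleGraph ↥S).edgeSet with hUS
    have hUScard : US.ncard = k * (k - 1) / 2 := by
      rw [hUS, Set.ncard_image_of_injective _ (Sym2.map.injective Subtype.val_injective),
        Set.ncard_eq_toFinset_card']
      have h := card_edgeFinset_top_eq_card_choose_two (V := ↥S)
      rw [edgeFinset] at h
      rw [h, hScard, Nat.choose_two_right]
    have hsub : ∀ i ∈ A, ((f i).edgeSet.toFinite.toFinset : Finset (Sym2 (Fin n)))
        ⊆ US.toFinite.toFinset := by
      intro i hi e he
      simp only [Set.Finite.mem_toFinset] at he ⊢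
      simp only [hA, Finset.mem_filter, Finset.mem_univ, true_and] at hi
      induction e with
      | _ u v =>
        rw [Subgraph.mem_edgeSet] at he
        have hu : u ∈ S := hi ▸ (f i).edge_vert he
        have hv : v ∈ S := hi ▸ (f i).edge_vert he.symm
        have hne : u ≠ v := ((f i).adj_sub he).ne
        refine ⟨s(⟨u, hu⟩, ⟨v, hv⟩), ?_, rfl⟩
        rw [mem_edgeSet]
        exact fun hh => hne (congrArg Subtype.val hh)
    have hdisj : ∀ i ∈ A, ∀ j ∈ A, i ≠ j →
        Disjoint ((f i).edgeSet.toFinite.toFinset) ((f j).edgeSet.toFinite.toFinset) := by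
      intro i _ j _ hij
      rw [Finset.disjoint_left]
      intro e hei hej
      simp only [Set.Finite.mem_toFinset] at hei hej
      induction e with
      | _ u v =>
        rw [Subgraph.mem_edgeSet] at hei hej
        exact (hD i j hij).2 u v ⟨hei, hej⟩
    have hbi := Finset.card_biUnion hdisj
    have hle : (A.biUnion fun i => ((f i).edgeSet.toFinite.toFinset)).card
        ≤ US.toFinite.toFinset.card := by
      apply Finset.card_le_card
      intro e he
      rw [Finset.mem_biUnion] at he
      obtain ⟨i, hi, hei⟩ := he
      exact hsub i hi hei
    have hsum : ∑ i ∈ A, ((f i).edgeSet.toFinite.toFinset).card = A.card * (k - 1) := by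
      rw [Finset.sum_congr rfl (fun i hi =>
        by rw [← Set.ncard_eq_toFinset_card _ ((f i).edgeSet.toFinite), hedge i hi]),
        Finset.sum_const, smul_eq_mul]
    have hUSf : US.toFinite.toFinset.card = k * (k - 1) / 2 := by
      rw [← Set.ncard_eq_toFinset_card _ US.toFinite, hUScard]
    have hmain : A.card * (k - 1) ≤ k * (k - 1) / 2 := by
      rw [← hsum, ← hbi, ← hUSf]
      exact hle
    have heven : 2 * (k * (k - 1) / 2) = k * (k - 1) := by
      apply Nat.two_mul_div_two_of_even
      have h6 : k * (k - 1) = (k - 1) * ((k - 1) + 1) := by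
        have h7 : (k - 1) + 1 = k := by omega
        rw [h7, mul_comm]
      rw [h6]
      exact Nat.even_mul_succ_self (k - 1)
    have h2a : 2 * A.card * (k - 1) ≤ k * (k - 1) := by
      calc 2 * A.card * (k - 1) = 2 * (A.card * (k - 1)) := by ring
        _ ≤ 2 * (k * (k - 1) / 2) := by omega
        _ = k * (k - 1) := heven
    have h2b : 2 * A.card ≤ k := by
      have hk1 : 0 < k - 1 := by omega
      exact Nat.le_of_mul_le_mul_right (by linarith [h2a]) hk1
    omega
  have htotal : A.card + Aᶜ.card = m := by
    rw [Finset.card_add_card_compl, Fintype.card_fin]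
  omega

lemma intDisjoint_symm {V : Type*} {S : Set V} {G : SimpleGraph V} {T₁ T₂ : G.Subgraph}
    (h : IntDisjoint S T₁ T₂) : IntDisjoint S T₂ T₁ :=
  ⟨by rw [Set.inter_comm]; exact h.1, fun u v hh => h.2 u v ⟨hh.2, hh.1⟩⟩

/-- parent function for the `j`-th double star. -/
def qd (k : ℕ) (j : Fin (k / 2)) (i : Fin k) : Fin k :=
  if i.val / 2 = j.val then
    (if i.val = 2 * j.val + 1 then ⟨2 * j.val, by have := j.isLt; omega⟩ else i)
  else ⟨2 * j.val + (i.val + (if i.val / 2 < j.val then 1 else 0)) % 2,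
    by have := j.isLt; omega⟩

def rootd (k : ℕ) (j : Fin (k / 2)) : Fin k := ⟨2 * j.val, by have := j.isLt; omega⟩

lemma qd_val (k : ℕ) (j : Fin (k / 2)) (i : Fin k) : (qd k j i).val =
    if i.val / 2 = j.val then (if i.val = 2 * j.val + 1 then 2 * j.val else i.val)
    else 2 * j.val + (i.val + (if i.val / 2 < j.val then 1 else 0)) % 2 := by
  unfold qd
  split_ifs <;> rfl

lemma qd_hyp (k : ℕ) (j : Fin (k / 2)) : ∀ i, i ≠ rootd k j →
    qd k j i ≠ i ∧ (qd k j i = rootd k j ∨ qd k j (qd k j i) = rootd k j) := by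
  intro i hi
  have hiv : i.val ≠ 2 * j.val := fun h => hi (Fin.ext h)
  have hik := i.isLt
  have hjk := j.isLt
  constructor
  · intro h
    have hv := congrArg Fin.val h
    rw [qd_val] at hv
    split_ifs at hv <;> omega
  · by_cases hroot : (qd k j i).val = 2 * j.val
    · exact Or.inl (Fin.ext hroot)
    · refine Or.inr (Fin.ext ?_)
      have hb : (qd k j i).val = 2 * j.val + 1 := by
        rw [qd_val]
        rw [qd_val] at hroot
        split_ifs at hroot ⊢ <;> omega
      show (qd k j (qd k j i)).val = (rootd k j).val
      rw [qd_val, hb]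
      have hr : (rootd k j).val = 2 * j.val := rfl
      rw [hr]
      split_ifs <;> omega

/-- the `j`-th double star. -/
def dblT {n k : ℕ} (σ : Fin k → Fin n) (j : Fin (k / 2)) : (⊤ : SimpleGraph (Fin n)).Subgraph :=
  funcTree σ (rootd k j) (qd k j)

/-- the star with center `c`. -/
def starT {n : ℕ} (S : Set (Fin n)) (c : Fin n) : (⊤ : SimpleGraph (Fin n)).Subgraph :=
  funcTree (fun o : Option ↥S => o.elim c (↑·)) none (fun _ => none)

lemma starT_verts {n : ℕ} (S : Set (Fin n)) (c : Fin n) :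
    (starT S c).verts = S ∪ {c} := by
  ext x
  constructor
  · rintro ⟨(_ | y), rfl⟩
    · exact Or.inr rfl
    · exact Or.inl y.2
  · rintro (hx | hx)
    · exact ⟨some ⟨x, hx⟩, rfl⟩
    · exact ⟨none, hx.symm⟩

lemma starT_isTree {n : ℕ} (S : Set (Fin n)) (c : Fin n) (hc : c ∉ S) :
    (starT S c).coe.IsTree := by
  apply funcTree_isTree
  · rintro (_ | x) (_ | y) hxy <;> simp only [Option.elim] at hxy
    · rfl
    · exfalso; apply hc; rw [hxy]; exact y.2
    · exfalso; apply hc; rw [← hxy]; exact x.2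
    · exact congrArg some (Subtype.ext hxy)
  · intro i hi
    exact ⟨fun h => hi h.symm, Or.inl rfl⟩

lemma starT_adj {n : ℕ} (S : Set (Fin n)) (c : Fin n) (u v : Fin n)
    (h : (starT S c).Adj u v) : (u = c ∧ v ∈ S) ∨ (v = c ∧ u ∈ S) := by
  obtain ⟨hne, o, ho, hcase⟩ := h
  match o, ho with
  | some x, _ =>
    rcases hcase with ⟨hu, hv⟩ | ⟨hv, hu⟩
    · exact Or.inr ⟨hv, hu ▸ x.2⟩
    · exact Or.inl ⟨hu, hv ▸ x.2⟩

lemma dblT_isTree {n k : ℕ} (σ : Fin k → Fin n) (hσ : Function.Injective σ)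
    (j : Fin (k / 2)) : (dblT σ j).coe.IsTree :=
  funcTree_isTree σ _ _ hσ (qd_hyp k j)

lemma dblT_verts {n k : ℕ} (σ : Fin k → Fin n) (j : Fin (k / 2)) :
    (dblT σ j).verts = Set.range σ := rfl

lemma dblT_adj {n k : ℕ} (σ : Fin k → Fin n) (j : Fin (k / 2)) (u v : Fin n)
    (h : (dblT σ j).Adj u v) : u ∈ Set.range σ ∧ v ∈ Set.range σ := by
  obtain ⟨hne, i, hi, hcase⟩ := h
  rcases hcase with ⟨hu, hv⟩ | ⟨hv, hu⟩
  · exact ⟨⟨i, hu.symm⟩, ⟨_, hv.symm⟩⟩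
  · exact ⟨⟨_, hu.symm⟩, ⟨i, hv.symm⟩⟩

lemma dblT_edge_disj {n k : ℕ} (σ : Fin k → Fin n) (hσ : Function.Injective σ)
    (j j' : Fin (k / 2)) (hjj : j ≠ j') (u v : Fin n) :
    ¬ ((dblT σ j).Adj u v ∧ (dblT σ j').Adj u v) := by
  rintro ⟨⟨hne, i, hi, hc⟩, ⟨hne', i', hi', hc'⟩⟩
  have hj : j.val ≠ j'.val := fun h => hjj (Fin.ext h)
  have hiv : i.val ≠ 2 * j.val := fun h => hi (Fin.ext h)
  have hiv' : i'.val ≠ 2 * j'.val := fun h => hi' (Fin.ext h)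
  have hik := i.isLt
  have hik' := i'.isLt
  have hjk := j.isLt
  have hjk' := j'.isLt
  rcases hc with ⟨hu, hv⟩ | ⟨hv, hu⟩ <;> rcases hc' with ⟨hu', hv'⟩ | ⟨hv', hu'⟩
  · have e1 : i.val = i'.val := congrArg Fin.val (hσ (hu.symm.trans hu'))
    have e2 : (qd k j i).val = (qd k j' i').val := congrArg Fin.val (hσ (hv.symm.trans hv'))
    rw [qd_val, qd_val] at e2
    split_ifs at e2 <;> omega
  · have e1 : i.val = (qd k j' i').val := congrArg Fin.val (hσ (hu.symm.trans hu'))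
    have e2 : (qd k j i).val = i'.val := congrArg Fin.val (hσ (hv.symm.trans hv'))
    rw [qd_val] at e1 e2
    split_ifs at e1 e2 <;> omega
  · have e1 : i.val = (qd k j' i').val := congrArg Fin.val (hσ (hv.symm.trans hv'))
    have e2 : (qd k j i).val = i'.val := congrArg Fin.val (hσ (hu.symm.trans hu'))
    rw [qd_val] at e1 e2
    split_ifs at e1 e2 <;> omega
  · have e1 : i.val = i'.val := congrArg Fin.val (hσ (hv.symm.trans hv'))
    have e2 : (qd k j i).val = (qd k j' i').val := congrArg Fin.val (hσ (hu.symm.trans hu'))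
    rw [qd_val, qd_val] at e2
    split_ifs at e2 <;> omega


lemma steiner_family {n k : ℕ} (hk : 2 ≤ k) (hkn : k ≤ n) (S : Set (Fin n)) (hS : S.ncard = k) :
    ∃ f : Fin (n - (k + 1) / 2) → (⊤ : SimpleGraph (Fin n)).Subgraph,
      (∀ i, IsSteinerTree ⊤ S (f i)) ∧ ∀ i j, i ≠ j → IntDisjoint S (f i) (f j) := by
  classical
  haveI : Fintype ↥S := Fintype.ofFinite _
  haveI : Fintype ↥(Sᶜ) := Fintype.ofFinite _
  have hScard : Fintype.card ↥S = k := by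
    rw [← Set.toFinset_card, ← Set.ncard_eq_toFinset_card']
    exact hS
  let e : ↥S ≃ Fin k := Fintype.equivFinOfCardEq hScard
  set σ : Fin k → Fin n := fun i => ↑(e.symm i) with hσdef
  have hσ : Function.Injective σ := fun a b h => e.symm.injective (Subtype.ext h)
  have hσr : Set.range σ = S := by
    ext x
    constructor
    · rintro ⟨i, rfl⟩
      exact (e.symm i).2
    · intro hx
      exact ⟨e ⟨x, hx⟩, by simp [hσdef]⟩
  set F : (↥(Sᶜ) ⊕ Fin (k / 2)) → (⊤ : SimpleGraph (Fin n)).Subgraph :=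
    Sum.elim (fun c => starT S ↑c) (fun j => dblT σ j) with hF
  have hFtree : ∀ a, IsSteinerTree ⊤ S (F a) := by
    rintro (c | j)
    · exact ⟨starT_isTree S ↑c c.2, by
        rw [hF, Sum.elim_inl, starT_verts]; exact Set.subset_union_left⟩
    · exact ⟨dblT_isTree σ hσ j, by rw [hF, Sum.elim_inr, dblT_verts, hσr]⟩
  -- disjointness building blocks
  have hstar_star : ∀ (c c' : ↥(Sᶜ)), c ≠ c' → IntDisjoint S (starT S ↑c) (starT S ↑c') := by
    intro c c' hne
    have hcc : (c : Fin n) ≠ ↑c' := fun h => hne (Subtype.ext h)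
    constructor
    · rw [starT_verts, starT_verts]
      ext x
      constructor
      · rintro ⟨(h1 | h1), (h2 | h2)⟩
        · exact h1
        · exact h1
        · exact h2
        · exact absurd (h1.symm.trans h2) hcc
      · intro hx
        exact ⟨Or.inl hx, Or.inl hx⟩
    · rintro u v ⟨h1, h2⟩
      rcases starT_adj S ↑c u v h1 with ⟨hu, hv⟩ | ⟨hv, hu⟩ <;>
        rcases starT_adj S ↑c' u v h2 with ⟨hu', hv'⟩ | ⟨hv', hu'⟩
      · exact hcc (hu.symm.trans hu')
      · exact c.2 (hu ▸ hu')
      · exact c.2 (hv ▸ hv')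
      · exact hcc (hv.symm.trans hv')
  have hstar_dbl : ∀ (c : ↥(Sᶜ)) (j : Fin (k / 2)), IntDisjoint S (starT S ↑c) (dblT σ j) := by
    intro c j
    constructor
    · rw [starT_verts, dblT_verts, hσr]
      ext x
      constructor
      · rintro ⟨(h1 | h1), h2⟩ <;> exact h2
      · intro hx
        exact ⟨Or.inl hx, hx⟩
    · rintro u v ⟨h1, h2⟩
      obtain ⟨hu2, hv2⟩ := dblT_adj σ j u v h2
      rw [hσr] at hu2 hv2
      rcases starT_adj S ↑c u v h1 with ⟨hu, _⟩ | ⟨hv, _⟩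
      · exact c.2 (hu ▸ hu2)
      · exact c.2 (hv ▸ hv2)
  have hdbl_dbl : ∀ (j j' : Fin (k / 2)), j ≠ j' → IntDisjoint S (dblT σ j) (dblT σ j') := by
    intro j j' hne
    refine ⟨?_, dblT_edge_disj σ hσ j j' hne⟩
    rw [dblT_verts, dblT_verts, hσr, Set.inter_self]
  have hFdisj : ∀ a b, a ≠ b → IntDisjoint S (F a) (F b) := by
    rintro (c | j) (c' | j') hne
    · exact hstar_star c c' (fun h => hne (congrArg Sum.inl h))
    · exact hstar_dbl c j'
    · exact intDisjoint_symm (hstar_dbl c' j)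
    · exact hdbl_dbl j j' (fun h => hne (congrArg Sum.inr h))
  have hcs : Fintype.card ↥(Sᶜ) = n - k := by
    rw [Fintype.card_compl_set, hScard, Fintype.card_fin]
  have hcard : Fintype.card (↥(Sᶜ) ⊕ Fin (k / 2)) = n - (k + 1) / 2 := by
    rw [Fintype.card_sum, hcs, Fintype.card_fin]
    omega
  let E : (↥(Sᶜ) ⊕ Fin (k / 2)) ≃ Fin (n - (k + 1) / 2) := Fintype.equivFinOfCardEq hcard
  exact ⟨F ∘ E.symm, fun i => hFtree _,
    fun i j hij => hFdisj _ _ (fun h => hij (E.symm.injective h))⟩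

lemma steinerConn_eq {n k : ℕ} (hk : 2 ≤ k) (hkn : k ≤ n) (S : Set (Fin n))
    (hS : S.ncard = k) : steinerConn (⊤ : SimpleGraph (Fin n)) S = n - (k + 1) / 2 := by
  apply IsGreatest.csSup_eq
  constructor
  · obtain ⟨f, h1, h2⟩ := steiner_family hk hkn S hS
    exact ⟨f, h1, h2⟩
  · rintro m ⟨f, h1, h2⟩
    exact steiner_upper hk hkn S hS f h1 h2

/-- Chartrand et al.: `κ_k(K_n) = n - ⌈k/2⌉`. -/
theorem genConn_completeGraph (n k : ℕ) (hk : 2 ≤ k) (hkn : k ≤ n) :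
    genConn (⊤ : SimpleGraph (Fin n)) k = n - (k + 1) / 2 := by
  have hex : (Set.range (Fin.castLE hkn)).ncard = k := by
    rw [← Set.image_univ, Set.ncard_image_of_injective _ (Fin.castLE_injective hkn),
      Set.ncard_univ]
    simp
  have hset : {c | ∃ S : Set (Fin n), S.ncard = k ∧ steinerConn ⊤ S = c}
      = {n - (k + 1) / 2} := by
    ext c
    simp only [Set.mem_setOf_eq, Set.mem_singleton_iff]
    constructor
    · rintro ⟨S, hS, rfl⟩
      exact steinerConn_eq hk hkn S hS
    · rintro rfl
      exact ⟨Set.range (Fin.castLE hkn), hex, steinerConn_eq hk hkn _ hex⟩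
  rw [genConn, hset, csInf_singleton]
end

section
/- For n ≥ 4, κ₃(P_n ∘ P₃) = 3, where P_n is the path on n vertices and ∘ is the lexicographic product. -/
open SimpleGraph

namespace SteinerAux

open SimpleGraph Walk

variable {V : Type*} {G : SimpleGraph V}

/-- Invariant: connected subgraph whose spanning coercion is acyclic. -/
def GoodT (T : G.Subgraph) : Prop := T.Connected ∧ T.spanningCoe.IsAcyclic

lemma GoodT.isTree {T : G.Subgraph} (h : GoodT T) : T.coe.IsTree := by
  refine ⟨Subgraph.connected_iff'.mp h.1, ?_⟩
  intro w c hc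
  let f : T.coe →g T.spanningCoe := ⟨Subtype.val, fun {a b} hab => hab⟩
  have hinj : Function.Injective f := Subtype.val_injective
  exact h.2 (c.map f) ((Walk.map_isCycle_iff_of_injective hinj).mpr hc)

lemma goodT_singleton (v : V) : GoodT (G.singletonSubgraph v) := by
  constructor
  · exact Subgraph.singletonSubgraph_connected
  · intro w c hc
    refine hc.ne_bot ?_
    ext x y
    simp [Subgraph.spanningCoe, SimpleGraph.singletonSubgraph]


lemma no_cycle_of_uniq_nbr {H : SimpleGraph V} {v u : V} (huniq : ∀ x, H.Adj v x → x = u)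
    (d : H.Walk v v) (hc' : d.IsCycle) : False := by
  cases d with
  | nil => exact hc'.ne_nil rfl
  | cons h q =>
    rename_i x
    have hlen : 3 ≤ (Walk.cons h q).length := hc'.three_le_length
    have hnodup : (Walk.cons h q).edges.Nodup := hc'.isTrail.edges_nodup
    rw [Walk.edges_cons, List.nodup_cons] at hnodup
    cases hE : (Walk.cons h q).reverse with
    | nil =>
      have hL := congrArg Walk.length hE
      rw [Walk.length_reverse] at hL
      simp only [Walk.length_nil] at hL
      omega
    | cons h' q' =>
      rename_i y
      have hedges := congrArg Walk.edges hE
      rw [Walk.edges_reverse, Walk.edges_cons, Walk.edges_cons] at hedges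
      have hyx : y = x := (huniq y h').trans (huniq x h).symm
      have hmem : s(v, x) ∈ q.edges := by
        rcases hrev : q.edges.reverse with _ | ⟨e0, l⟩
        · have hqe : q.edges = [] := List.reverse_eq_nil_iff.mp hrev
          have hlq := congrArg List.length hqe
          rw [Walk.length_edges] at hlq
          simp only [List.length_nil] at hlq
          simp only [Walk.length_cons] at hlen
          omega
        · rw [List.reverse_cons, hrev, List.cons_append] at hedges
          have he0 : e0 = s(v, y) := ((List.cons.injEq _ _ _ _).mp hedges).1
          have hm : s(v, y) ∈ q.edges.reverse := by rw [hrev, ← he0]; exact List.mem_cons_self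
          rw [hyx] at hm
          exact List.mem_reverse.mp hm
      exact hnodup.1 hmem

lemma goodT_sup_leaf {T : G.Subgraph} {u v : V} (hadj : G.Adj u v)
    (hT : GoodT T) (hu : u ∈ T.verts) (hv : v ∉ T.verts) :
    GoodT (T ⊔ G.subgraphOfAdj hadj) := by
  constructor
  · exact Subgraph.connected_sup hT.1.preconnected (Subgraph.subgraphOfAdj_connected hadj).preconnected ⟨u, hu, by simp⟩
  · intro w c hc
    classical
    by_cases hvc : v ∈ c.support
    · -- v has a unique neighbour, but a cycle through v gives two distinct incident edges
      have huniq : ∀ x : V, (T ⊔ G.subgraphOfAdj hadj).spanningCoe.Adj v x → x = u := by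
        intro x hx
        rcases (Subgraph.sup_adj).mp hx with h | h
        · exact absurd h.fst_mem hv
        · rw [subgraphOfAdj_adj, Sym2.eq_iff] at h
          rcases h with ⟨h1, h2⟩ | ⟨h1, h2⟩
          · exact absurd h1 (fun h => hv (h ▸ hu))
          · exact h1.symm
      exact no_cycle_of_uniq_nbr huniq (c.rotate v hvc) (hc.rotate hvc)
    · -- cycle avoids v, transfer it into T
      have hE : ∀ e ∈ c.edges, e ∈ T.spanningCoe.edgeSet := by
        intro e he
        have h1 := c.edges_subset_edgeSet he
        induction e with
        | h x y =>
          rw [SimpleGraph.mem_edgeSet] at h1 ⊢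
          rcases (Subgraph.sup_adj).mp h1 with h2 | h2
          · exact h2
          · rw [subgraphOfAdj_adj, Sym2.eq_iff] at h2
            exfalso
            rcases h2 with ⟨h3, h4⟩ | ⟨h3, h4⟩
            · exact hvc (h4 ▸ Walk.snd_mem_support_of_mem_edges c he)
            · exact hvc (h4 ▸ Walk.fst_mem_support_of_mem_edges c he)
      exact hT.2 (c.transfer T.spanningCoe hE) (hc.transfer hE)

lemma subgraphOfAdj_symm {u v : V} (h : G.Adj u v) :
    G.subgraphOfAdj h.symm = G.subgraphOfAdj h := by
  ext x y
  · constructor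
    · intro hx; rcases hx with rfl | rfl
      · exact Or.inr rfl
      · exact Or.inl rfl
    · intro hx; rcases hx with rfl | rfl
      · exact Or.inr rfl
      · exact Or.inl rfl
  · show s(v, u) = s(x, y) ↔ s(u, v) = s(x, y)
    rw [Sym2.eq_swap]

lemma goodT_sup_leaf' {T : G.Subgraph} {u v : V} (hadj : G.Adj u v)
    (hT : GoodT T) (hv : v ∈ T.verts) (hu : u ∉ T.verts) :
    GoodT (T ⊔ G.subgraphOfAdj hadj) := by
  rw [← subgraphOfAdj_symm hadj]
  exact goodT_sup_leaf hadj.symm hT hv hu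

end SteinerAux

section Construction

abbrev VV (n : ℕ) := Fin n × Fin 3

abbrev GG (n : ℕ) : SimpleGraph (VV n) := lexProd (pathGraph n) (pathGraph 3)

lemma gg_adj {n : ℕ} {u v : VV n} :
    (GG n).Adj u v ↔ (u.1.val + 1 = v.1.val ∨ v.1.val + 1 = u.1.val) ∨
      (u.1 = v.1 ∧ (u.2.val + 1 = v.2.val ∨ v.2.val + 1 = u.2.val)) := by
  show (pathGraph n).Adj u.1 v.1 ∨ (u.1 = v.1 ∧ (pathGraph 3).Adj u.2 v.2) ↔ _
  rw [pathGraph_adj, pathGraph_adj]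

lemma adj_of_cols {n : ℕ} {u v : VV n}
    (h : u.1.val + 1 = v.1.val ∨ v.1.val + 1 = u.1.val) : (GG n).Adj u v :=
  gg_adj.mpr (Or.inl h)

/-- The walk along row `r` from column `k` down to column `0`. -/
def rowWalk (n : ℕ) (r : Fin 3) :
    (k : ℕ) → (hk : k < n) → (GG n).Walk (⟨k, hk⟩, r) (⟨0, Nat.lt_of_le_of_lt (Nat.zero_le k) hk⟩, r)
  | 0, _ => Walk.nil
  | (k+1), hk => Walk.cons (adj_of_cols (by simp)) (rowWalk n r k (by omega))

lemma rowWalk_support (n : ℕ) (r : Fin 3) :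
    ∀ (k : ℕ) (hk : k < n) (x : VV n),
      x ∈ (rowWalk n r k hk).support ↔ (x.2 = r ∧ x.1.val ≤ k)
  | 0, hk, x => by
    simp only [rowWalk, Walk.support_nil, List.mem_singleton]
    constructor
    · rintro rfl; exact ⟨rfl, le_refl 0⟩
    · rintro ⟨h2, h1⟩
      have h1' : x.1.val = 0 := by omega
      have h0 : x.1 = ⟨0, Nat.lt_of_le_of_lt (Nat.zero_le 0) hk⟩ := Fin.ext (by simp [h1'])
      exact Prod.ext h0 h2
  | (k+1), hk, x => by
    rw [rowWalk]
    rw [Walk.support_cons]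
    rw [List.mem_cons, rowWalk_support n r k (by omega) x]
    constructor
    · rintro (rfl | ⟨h2, h1⟩)
      · exact ⟨rfl, le_refl _⟩
      · exact ⟨h2, by omega⟩
    · rintro ⟨h2, h1⟩
      rcases Nat.lt_or_ge x.1.val (k+1) with h | h
      · exact Or.inr ⟨h2, by omega⟩
      · left
        have h1' : x.1.val = k + 1 := by omega
        have h0 : x.1 = ⟨k+1, hk⟩ := Fin.ext (by simp [h1'])
        exact Prod.ext h0 h2

lemma rowWalk_isPath (n : ℕ) (r : Fin 3) :
    ∀ (k : ℕ) (hk : k < n), (rowWalk n r k hk).IsPath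
  | 0, hk => by rw [rowWalk]; exact Walk.IsPath.nil
  | (k+1), hk => by
    rw [rowWalk]
    rw [Walk.cons_isPath_iff]
    refine ⟨rowWalk_isPath n r k (by omega), ?_⟩
    rw [rowWalk_support n r k (by omega)]
    rintro ⟨-, h1⟩
    simp at h1

lemma rowWalk_adj_row (n : ℕ) (r : Fin 3) :
    ∀ (k : ℕ) (hk : k < n) (u v : VV n),
      (rowWalk n r k hk).toSubgraph.Adj u v → u.2 = r ∧ v.2 = r
  | 0, hk, u, v => by
    rw [rowWalk]
    intro h
    simp only [Walk.toSubgraph] at h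
    rw [singletonSubgraph_adj] at h
    exact absurd h (by simp)
  | (k+1), hk, u, v => by
    rw [rowWalk]
    intro h
    simp only [Walk.toSubgraph, Subgraph.sup_adj] at h
    rcases h with h | h
    · rw [subgraphOfAdj_adj, Sym2.eq_iff] at h
      rcases h with ⟨h1, h2⟩ | ⟨h1, h2⟩
      · exact ⟨by rw [← h1], by rw [← h2]⟩
      · exact ⟨by rw [← h2], by rw [← h1]⟩
    · exact rowWalk_adj_row n r k (by omega) u v h

lemma rowWalk_verts (n : ℕ) (r : Fin 3) (k : ℕ) (hk : k < n) (x : VV n) :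
    x ∈ (rowWalk n r k hk).toSubgraph.verts ↔ (x.2 = r ∧ x.1.val ≤ k) := by
  rw [Walk.mem_verts_toSubgraph, rowWalk_support]

lemma rowWalk_goodT (n : ℕ) (r : Fin 3) :
    ∀ (k : ℕ) (hk : k < n), SteinerAux.GoodT ((rowWalk n r k hk).toSubgraph)
  | 0, hk => by rw [rowWalk]; exact SteinerAux.goodT_singleton _
  | (k+1), hk => by
    rw [rowWalk]
    simp only [Walk.toSubgraph]
    rw [sup_comm]
    apply SteinerAux.goodT_sup_leaf' _ (rowWalk_goodT n r k (by omega))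
    · rw [rowWalk_verts]
      exact ⟨rfl, le_refl _⟩
    · rw [rowWalk_verts]
      rintro ⟨-, h1⟩
      simp at h1

/-- Attachment column. -/
def attc (n t : ℕ) (htn : t < n) (i : Fin n) : Fin n :=
  if _ : i.val < t then ⟨i.val + 1, by omega⟩ else ⟨i.val - 1, by omega⟩

lemma attc_val (n t : ℕ) (htn : t < n) (i : Fin n) :
    (attc n t htn i).val = if i.val < t then i.val + 1 else i.val - 1 := by
  unfold attc
  split <;> simp_all

lemma attc_adj {n t : ℕ} (ht1 : 1 ≤ t) (htn : t < n) (s : VV n) (r : Fin 3) :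
    (GG n).Adj (attc n t htn s.1, r) s := by
  apply adj_of_cols
  show (attc n t htn s.1).val + 1 = s.1.val ∨ s.1.val + 1 = (attc n t htn s.1).val
  rw [attc_val]
  split <;> omega

/-- The pendant edge attaching `s` to row `r` (trivial if `s` is in row `r`). -/
def leafSG (n t : ℕ) (ht1 : 1 ≤ t) (htn : t < n) (s : VV n) (r : Fin 3) : (GG n).Subgraph :=
  if s.2 = r then ⊥ else (GG n).subgraphOfAdj (attc_adj ht1 htn s r)

lemma leafSG_adj {n t : ℕ} {ht1 : 1 ≤ t} {htn : t < n} {s : VV n} {r : Fin 3} {u v : VV n}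
    (h : (leafSG n t ht1 htn s r).Adj u v) :
    s.2 ≠ r ∧ s((attc n t htn s.1, r), s) = s(u, v) := by
  unfold leafSG at h
  split at h
  · exact absurd h (by simp)
  · rw [subgraphOfAdj_adj] at h
    exact ⟨by assumption, h⟩

lemma step_lemma (n t : ℕ) (ht1 : 1 ≤ t) (htn : t < n) (r : Fin 3) (T : (GG n).Subgraph)
    (s : VV n) (E : Set (VV n))
    (hP : SteinerAux.GoodT T) (hrow : ∀ x : VV n, x.2 = r → x ∈ T.verts)
    (hup : T.verts ⊆ {x : VV n | x.2 = r} ∪ E) (hsE : s ∉ E) :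
    SteinerAux.GoodT (T ⊔ leafSG n t ht1 htn s r) ∧
      (T ⊔ leafSG n t ht1 htn s r).verts ⊆ {x : VV n | x.2 = r} ∪ (E ∪ {s}) ∧
      s ∈ (T ⊔ leafSG n t ht1 htn s r).verts ∧
      (∀ x : VV n, x.2 = r → x ∈ (T ⊔ leafSG n t ht1 htn s r).verts) := by
  by_cases h : s.2 = r
  · rw [leafSG, if_pos h, sup_bot_eq]
    exact ⟨hP, hup.trans (Set.union_subset_union_right _ Set.subset_union_left),
      hrow s h, hrow⟩
  · have hnew : s ∉ T.verts := by
      intro hs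
      rcases hup hs with hx | hx
      · exact h hx
      · exact hsE hx
    rw [leafSG, if_neg h]
    refine ⟨SteinerAux.goodT_sup_leaf _ hP (hrow _ rfl) hnew, ?_, ?_, ?_⟩
    · rw [Subgraph.verts_sup, subgraphOfAdj_verts]
      apply Set.union_subset
      · exact hup.trans (Set.union_subset_union_right _ Set.subset_union_left)
      · intro x hx
        rcases hx with rfl | rfl
        · exact Or.inl rfl
        · exact Or.inr (Or.inr rfl)
    · rw [Subgraph.verts_sup, subgraphOfAdj_verts]
      exact Or.inr (Or.inr rfl)
    · intro x hx
      rw [Subgraph.verts_sup]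
      exact Or.inl (hrow x hx)

/-- The caterpillar tree through row `r` picking up `a`, `b`, `c`. -/
def cat (n t : ℕ) (hn4 : 4 ≤ n) (ht1 : 1 ≤ t) (htn : t < n) (a b c : VV n) (r : Fin 3) :
    (GG n).Subgraph :=
  (((rowWalk n r (n-1) (by omega)).toSubgraph ⊔ leafSG n t ht1 htn a r)
    ⊔ leafSG n t ht1 htn b r) ⊔ leafSG n t ht1 htn c r

lemma cat_props (n t : ℕ) (hn4 : 4 ≤ n) (ht1 : 1 ≤ t) (htn : t < n) (a b c : VV n)
    (hab : a ≠ b) (hac : a ≠ c) (hbc : b ≠ c) (r : Fin 3) :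
    SteinerAux.GoodT (cat n t hn4 ht1 htn a b c r) ∧
      (cat n t hn4 ht1 htn a b c r).verts ⊆ {x : VV n | x.2 = r} ∪ {a, b, c} ∧
      ({a, b, c} : Set (VV n)) ⊆ (cat n t hn4 ht1 htn a b c r).verts := by
  have hrow0 : ∀ x : VV n, x.2 = r → x ∈ ((rowWalk n r (n-1) (by omega)).toSubgraph).verts := by
    intro x hx
    rw [rowWalk_verts]
    exact ⟨hx, by omega⟩
  have hup0 : ((rowWalk n r (n-1) (by omega)).toSubgraph).verts ⊆
      {x : VV n | x.2 = r} ∪ (∅ : Set (VV n)) := by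
    intro x hx
    rw [rowWalk_verts] at hx
    exact Or.inl hx.1
  obtain ⟨g1, u1, m1, row1⟩ := step_lemma n t ht1 htn r _ a ∅
    (rowWalk_goodT n r (n-1) (by omega)) hrow0 hup0 (Set.notMem_empty a)
  obtain ⟨g2, u2, m2, row2⟩ := step_lemma n t ht1 htn r _ b (∅ ∪ {a}) g1 row1 u1
    (by simp [hab.symm] : b ∉ (∅ ∪ {a} : Set (VV n)))
  obtain ⟨g3, u3, m3, row3⟩ := step_lemma n t ht1 htn r _ c ((∅ ∪ {a}) ∪ {b}) g2 row2 u2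
    (by simp [hac.symm, hbc.symm] : c ∉ ((∅ ∪ {a}) ∪ {b} : Set (VV n)))
  refine ⟨g3, ?_, ?_⟩
  · refine u3.trans ?_
    apply Set.union_subset_union_right
    intro x hx
    simp only [Set.mem_union, Set.mem_empty_iff_false, Set.mem_singleton_iff, false_or] at hx
    simp only [Set.mem_insert_iff, Set.mem_singleton_iff]
    tauto
  · intro x hx
    simp only [Set.mem_insert_iff, Set.mem_singleton_iff] at hx
    rcases hx with rfl | rfl | rfl
    · exact Or.inl (Or.inl m1)
    · exact Or.inl m2
    · exact m3

lemma cat_adj (n t : ℕ) (hn4 : 4 ≤ n) (ht1 : 1 ≤ t) (htn : t < n) (a b c : VV n) (r : Fin 3)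
    {u v : VV n} (h : (cat n t hn4 ht1 htn a b c r).Adj u v) :
    (u.2 = r ∧ v.2 = r) ∨
      ∃ s : VV n, (s = a ∨ s = b ∨ s = c) ∧ s.2 ≠ r ∧
        s((attc n t htn s.1, r), s) = s(u, v) := by
  rcases (Subgraph.sup_adj).mp h with h' | h'
  · rcases (Subgraph.sup_adj).mp h' with h'' | h''
    · rcases (Subgraph.sup_adj).mp h'' with h3 | h3
      · exact Or.inl (rowWalk_adj_row n r (n-1) (by omega) u v h3)
      · obtain ⟨hs2, he⟩ := leafSG_adj h3
        exact Or.inr ⟨a, Or.inl rfl, hs2, he⟩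
    · obtain ⟨hs2, he⟩ := leafSG_adj h''
      exact Or.inr ⟨b, Or.inr (Or.inl rfl), hs2, he⟩
  · obtain ⟨hs2, he⟩ := leafSG_adj h'
    exact Or.inr ⟨c, Or.inr (Or.inr rfl), hs2, he⟩

lemma leaf_conflict (n t : ℕ) (ht1 : 1 ≤ t) (htn : t < n) (S : Set (VV n))
    (hgood : ¬((∃ s ∈ S, s.1.val = t) ∧ (∃ s ∈ S, s.1.val + 1 = t)))
    {x y : VV n} (hx : x ∈ S) (hy : y ∈ S) {r r' : Fin 3} (hrr : r ≠ r')
    (he : s((attc n t htn x.1, r), x) = s((attc n t htn y.1, r'), y)) : False := by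
  rw [Sym2.eq_iff] at he
  rcases he with ⟨h1, h2⟩ | ⟨h1, h2⟩
  · exact hrr (congrArg Prod.snd h1)
  · have hy1 : y.1 = attc n t htn x.1 := (congrArg Prod.fst h1).symm
    have hx1 : x.1 = attc n t htn y.1 := congrArg Prod.fst h2
    have hyv := congrArg Fin.val hy1
    have hxv := congrArg Fin.val hx1
    rw [attc_val] at hyv hxv
    have hbad : (x.1.val = t ∧ y.1.val + 1 = t) ∨ (y.1.val = t ∧ x.1.val + 1 = t) := by
      split_ifs at hyv hxv <;> omega
    apply hgood
    rcases hbad with ⟨hxt, hyt⟩ | ⟨hyt, hxt⟩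
    · exact ⟨⟨x, hx, hxt⟩, ⟨y, hy, hyt⟩⟩
    · exact ⟨⟨y, hy, hyt⟩, ⟨x, hx, hxt⟩⟩

lemma row_leaf_conflict {n t : ℕ} {htn : t < n} {s u v : VV n} {i j : Fin 3} (hij : i ≠ j)
    (hu : u.2 = i) (hv : v.2 = i)
    (he : s((attc n t htn s.1, j), s) = s(u, v)) : False := by
  rw [Sym2.eq_iff] at he
  rcases he with ⟨h1, h2⟩ | ⟨h1, h2⟩
  · exact hij ((congrArg Prod.snd h1).trans hu).symm
  · exact hij ((congrArg Prod.snd h1).trans hv).symm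

lemma exists_good_t (n : ℕ) (hn4 : 4 ≤ n) (a b c : VV n) :
    ∃ t : ℕ, 1 ≤ t ∧ t < n ∧
      ¬((∃ s ∈ ({a, b, c} : Set (VV n)), s.1.val = t) ∧
        (∃ s ∈ ({a, b, c} : Set (VV n)), s.1.val + 1 = t)) := by
  by_contra hcon
  push_neg at hcon
  have h1 := hcon 1 (by omega) (by omega)
  have h2 := hcon 2 (by omega) (by omega)
  have h3 := hcon 3 (by omega) (by omega)
  obtain ⟨⟨s1, hs1, e1⟩, ⟨s0, hs0, e0⟩⟩ := h1
  obtain ⟨⟨s2, hs2, e2⟩, -⟩ := h2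
  obtain ⟨⟨s3, hs3, e3⟩, -⟩ := h3
  simp only [Set.mem_insert_iff, Set.mem_singleton_iff] at hs0 hs1 hs2 hs3
  rcases hs0 with rfl | rfl | rfl <;> rcases hs1 with rfl | rfl | rfl <;>
    rcases hs2 with rfl | rfl | rfl <;> rcases hs3 with rfl | rfl | rfl <;> omega

lemma three_trees (n : ℕ) (hn4 : 4 ≤ n) (S : Set (VV n)) (hS : S.ncard = 3) :
    ∃ f : Fin 3 → (GG n).Subgraph,
      (∀ i, IsSteinerTree (GG n) S (f i)) ∧ ∀ i j, i ≠ j → IntDisjoint S (f i) (f j) := by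
  obtain ⟨a, b, c, hab, hac, hbc, rfl⟩ := Set.ncard_eq_three.mp hS
  obtain ⟨t, ht1, htn, hgood⟩ := exists_good_t n hn4 a b c
  have hmemS : ∀ s : VV n, (s = a ∨ s = b ∨ s = c) → s ∈ ({a, b, c} : Set (VV n)) := by
    intro s hs
    simp only [Set.mem_insert_iff, Set.mem_singleton_iff]
    exact hs
  refine ⟨fun r => cat n t hn4 ht1 htn a b c r, fun i => ?_, fun i j hij => ?_⟩
  · obtain ⟨g, hup, hmem⟩ := cat_props n t hn4 ht1 htn a b c hab hac hbc i
    exact ⟨g.isTree, hmem⟩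
  · obtain ⟨gi, hui, hmi⟩ := cat_props n t hn4 ht1 htn a b c hab hac hbc i
    obtain ⟨gj, huj, hmj⟩ := cat_props n t hn4 ht1 htn a b c hab hac hbc j
    constructor
    · apply Set.Subset.antisymm
      · intro x hx
        rcases hui hx.1 with h1 | h1
        · rcases huj hx.2 with h2 | h2
          · exact absurd (h1.symm.trans h2 : (i : Fin 3) = j) hij
          · exact h2
        · exact h1
      · exact Set.subset_inter hmi hmj
    · rintro u v ⟨h1, h2⟩
      rcases cat_adj n t hn4 ht1 htn a b c i h1 with ⟨hu1, hv1⟩ | ⟨s, hsS, hs2, he⟩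
      · rcases cat_adj n t hn4 ht1 htn a b c j h2 with ⟨hu2, hv2⟩ | ⟨s', hsS', hs2', he'⟩
        · exact hij (hu1.symm.trans hu2)
        · exact row_leaf_conflict hij hu1 hv1 he'
      · rcases cat_adj n t hn4 ht1 htn a b c j h2 with ⟨hu2, hv2⟩ | ⟨s', hsS', hs2', he'⟩
        · exact row_leaf_conflict hij.symm hu2 hv2 he
        · exact leaf_conflict n t ht1 htn _ hgood (hmemS s hsS) (hmemS s' hsS') hij
            (he.trans he'.symm)

lemma cross_col (n k : ℕ) {x y : VV n} (p : (GG n).Walk x y) :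
    x.1.val ≤ k → k ≤ y.1.val → ∃ z ∈ p.support, z.1.val = k := by
  induction p with
  | nil =>
    rename_i u
    intro hx hy
    exact ⟨u, by simp, by omega⟩
  | cons h q ih =>
    rename_i u v w
    intro hx hy
    by_cases hk : u.1.val = k
    · exact ⟨u, by simp, hk⟩
    · have hv : v.1.val ≤ k := by
        rcases gg_adj.mp h with hcol | ⟨hcol, -⟩
        · omega
        · rw [← hcol]; omega
      obtain ⟨z, hz, hzk⟩ := ih hv hy
      exact ⟨z, by rw [Walk.support_cons]; exact List.mem_cons_of_mem _ hz, hzk⟩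

lemma steiner_bdd (n : ℕ) (S : Set (VV n)) {a b : VV n} (ha : a ∈ S) (hb : b ∈ S)
    (hab : a ≠ b) :
    ∀ m ∈ {m | ∃ f : Fin m → (GG n).Subgraph,
      (∀ i, IsSteinerTree (GG n) S (f i)) ∧ ∀ i j, i ≠ j → IntDisjoint S (f i) (f j)},
      m ≤ Nat.card (Set (Sym2 (VV n))) := by
  rintro m ⟨f, hf, hdisj⟩
  have hedge : ∀ i, ∃ e, e ∈ (f i).edgeSet := by
    intro i
    obtain ⟨htree, hsub⟩ := hf i
    obtain ⟨w⟩ := htree.isConnected.preconnected ⟨a, hsub ha⟩ ⟨b, hsub hb⟩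
    have hnn : ¬ w.Nil := Walk.not_nil_of_ne (fun hcon => hab (congrArg Subtype.val hcon))
    have hadj := w.adj_snd hnn
    exact ⟨s((⟨a, hsub ha⟩ : (f i).verts).val, (w.getVert 1).val), hadj⟩
  have hinj : Function.Injective (fun i => (f i).edgeSet) := by
    intro i j hije
    by_contra hij
    obtain ⟨e, he⟩ := hedge i
    have he' : e ∈ (f j).edgeSet := by
      have : (f i).edgeSet = (f j).edgeSet := hije
      rw [← this]; exact he
    induction e with
    | h x y => exact (hdisj i j hij).2 x y ⟨he, he'⟩
  calc m = Nat.card (Fin m) := by simp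
    _ ≤ Nat.card (Set (Sym2 (VV n))) := Nat.card_le_card_of_injective _ hinj

def xA (n : ℕ) (hn : 4 ≤ n) : VV n := (⟨0, by omega⟩, 0)
def xB (n : ℕ) (hn : 4 ≤ n) : VV n := (⟨0, by omega⟩, 1)
def xC (n : ℕ) (hn : 4 ≤ n) : VV n := (⟨3, by omega⟩, 0)

lemma upper_S0 (n : ℕ) (hn : 4 ≤ n) :
    ∀ m ∈ {m | ∃ f : Fin m → (GG n).Subgraph,
      (∀ i, IsSteinerTree (GG n) ({xA n hn, xB n hn, xC n hn} : Set (VV n)) (f i)) ∧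
      ∀ i j, i ≠ j → IntDisjoint ({xA n hn, xB n hn, xC n hn} : Set (VV n)) (f i) (f j)},
      m ≤ 3 := by
  rintro m ⟨f, hf, hdisj⟩
  have key : ∀ i : Fin m, ∃ z : VV n, z ∈ (f i).verts ∧ z.1.val = 1 := by
    intro i
    obtain ⟨htree, hsub⟩ := hf i
    have hxA : xA n hn ∈ (f i).verts := hsub (Or.inl rfl)
    have hxC : xC n hn ∈ (f i).verts := hsub (Or.inr (Or.inr rfl))
    obtain ⟨w⟩ := htree.isConnected.preconnected ⟨_, hxA⟩ ⟨_, hxC⟩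
    have hcross := cross_col n 1 (w.map ((f i).hom))
      (by show (xA n hn).1.val ≤ 1; simp [xA]) (by show 1 ≤ (xC n hn).1.val; simp [xC])
    obtain ⟨z, hz, hz1⟩ := hcross
    rw [Walk.support_map, List.mem_map] at hz
    obtain ⟨zs, hzs, rfl⟩ := hz
    exact ⟨zs.val, zs.property, hz1⟩
  choose g hg1 hg2 using key
  have hginj : Function.Injective g := by
    intro i j hije
    by_contra hij
    have hmem : g i ∈ (f i).verts ∩ (f j).verts := ⟨hg1 i, by rw [hije]; exact hg1 j⟩
    rw [(hdisj i j hij).1] at hmem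
    have h1 := hg2 i
    rcases hmem with h | h | h <;> rw [h] at h1 <;> simp [xA, xB, xC] at h1
  have hinj2 : Function.Injective (fun i : Fin m => (g i).2) := by
    intro i j hrow
    apply hginj
    have hcol : (g i).1 = (g j).1 := Fin.ext (by rw [hg2 i, hg2 j])
    exact Prod.ext hcol hrow
  calc m = Fintype.card (Fin m) := by simp
    _ ≤ Fintype.card (Fin 3) := Fintype.card_le_of_injective _ hinj2
    _ = 3 := by simp

end Construction


/-- `κ₃(P_n ∘ P₃) = 3` for `n ≥ 4`. -/
theorem genConn_three_path_lexProd_path (n : ℕ) (hn : 4 ≤ n) :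
    genConn (lexProd (pathGraph n) (pathGraph 3)) 3 = 3 := by
  have hl : ∀ SS : Set (VV n), SS.ncard = 3 → 3 ≤ steinerConn (GG n) SS := by
    intro SS h3
    obtain ⟨a, b, c, hab, hac, hbc, hSet⟩ := Set.ncard_eq_three.mp h3
    have ha : a ∈ SS := by rw [hSet]; exact Or.inl rfl
    have hb : b ∈ SS := by rw [hSet]; exact Or.inr (Or.inl rfl)
    have hbdd : BddAbove {m | ∃ f : Fin m → (GG n).Subgraph,
        (∀ i, IsSteinerTree (GG n) SS (f i)) ∧ ∀ i j, i ≠ j → IntDisjoint SS (f i) (f j)} :=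
      ⟨Nat.card (Set (Sym2 (VV n))), fun m hm => steiner_bdd n SS ha hb hab m hm⟩
    have hmem3 : 3 ∈ {m | ∃ f : Fin m → (GG n).Subgraph,
        (∀ i, IsSteinerTree (GG n) SS (f i)) ∧ ∀ i j, i ≠ j → IntDisjoint SS (f i) (f j)} :=
      three_trees n hn SS h3
    exact le_csSup hbdd hmem3
  have hS0card : ({xA n hn, xB n hn, xC n hn} : Set (VV n)).ncard = 3 := by
    rw [Set.ncard_eq_three]
    refine ⟨xA n hn, xB n hn, xC n hn, ?_, ?_, ?_, rfl⟩
    · simp [xA, xB, Prod.ext_iff, Fin.ext_iff]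
    · simp [xA, xC, Prod.ext_iff, Fin.ext_iff]
    · simp [xB, xC, Prod.ext_iff, Fin.ext_iff]
  have hne : {m | ∃ f : Fin m → (GG n).Subgraph,
      (∀ i, IsSteinerTree (GG n) ({xA n hn, xB n hn, xC n hn} : Set (VV n)) (f i)) ∧
      ∀ i j, i ≠ j → IntDisjoint ({xA n hn, xB n hn, xC n hn} : Set (VV n)) (f i) (f j)}.Nonempty :=
    ⟨0, ⟨fun i => i.elim0, fun i => i.elim0, fun i j _ => i.elim0⟩⟩
  have hS0val : steinerConn (GG n) ({xA n hn, xB n hn, xC n hn} : Set (VV n)) = 3 :=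
    le_antisymm (csSup_le hne (upper_S0 n hn)) (hl _ hS0card)
  have hmemfin : 3 ∈ {c | ∃ S : Set (VV n), S.ncard = 3 ∧ steinerConn (GG n) S = c} :=
    ⟨{xA n hn, xB n hn, xC n hn}, hS0card, hS0val⟩
  unfold genConn
  apply le_antisymm
  · exact Nat.sInf_le hmemfin
  · apply le_csInf ⟨3, hmemfin⟩
    rintro c ⟨SS, hSS, rfl⟩
    exact hl SS hSS
end
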